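/- The number of ℓ-core partitions whose largest part equals k is the binomial coefficient C(k + ℓ - 2, k). -/

import Mathlib

/-- The hook length of the box `(a, b)` (0-indexed row `a`, column `b`)
of the Young diagram `μ`: the number of boxes to the right in its row,
plus the number of boxes below in its column, plus one. -/
def hookLen (μ : YoungDiagram) (a b : ℕ) : ℕ :=
  μ.rowLen a + μ.colLen b - a - b - 1

/-- A partition (Young diagram) is an `ℓ`-core when no box has hook length
divisible by `ℓ`. -/
def IsCore (ℓ : ℕ) (μ : YoungDiagram) : Prop :=
  ∀ a b : ℕ, (a, b) ∈ μ → ¬ ℓ ∣ hookLen μ a b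

namespace CoreAux

open YoungDiagram Finset

/-! ### beta set basics -/

/-- The first-column hook length `β_i`. -/
def beta (μ : YoungDiagram) (i : ℕ) : ℕ := μ.rowLen i + μ.colLen 0 - i - 1

/-- The "gap" function. -/
def fB (μ : YoungDiagram) (b : ℕ) : ℕ := b + μ.colLen 0 - μ.colLen b

lemma mem_char (μ : YoungDiagram) (i b : ℕ) : b < μ.rowLen i ↔ i < μ.colLen b := by
  rw [← mem_iff_lt_rowLen, mem_iff_lt_colLen]

lemma colLen_le (μ : YoungDiagram) (b : ℕ) : μ.colLen b ≤ μ.colLen 0 :=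
  μ.colLen_anti 0 b b.zero_le

lemma beta_lt {μ : YoungDiagram} {i j : ℕ} (hij : i < j) (hj : j < μ.colLen 0) :
    beta μ j < beta μ i := by
  have h1 : μ.rowLen j ≤ μ.rowLen i := μ.rowLen_anti i j hij.le
  have h2 : 0 < μ.rowLen j := (mem_char μ j 0).mpr hj
  simp only [beta]; omega

lemma beta_pos {μ : YoungDiagram} {i : ℕ} (hi : i < μ.colLen 0) : 0 < beta μ i := by
  have := (mem_char μ i 0).mpr hi
  simp only [beta]; omega

lemma fB_ne_beta {μ : YoungDiagram} (b : ℕ) {i : ℕ} (hi : i < μ.colLen 0) :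
    beta μ i ≠ fB μ b := by
  have hcb := colLen_le μ b
  have hpos : 0 < μ.rowLen i := (mem_char μ i 0).mpr hi
  rcases lt_or_ge i (μ.colLen b) with h | h
  · have hb : b < μ.rowLen i := (mem_char μ i b).mpr h
    simp only [beta, fB]; omega
  · have hb : ¬ b < μ.rowLen i := fun hb => absurd ((mem_char μ i b).mp hb) (not_lt.2 h)
    simp only [beta, fB]; omega

lemma fB_add_hookLen {μ : YoungDiagram} {a b : ℕ} (h : (a, b) ∈ μ) :
    fB μ b + hookLen μ a b = beta μ a := by
  have h1 : b < μ.rowLen a := mem_iff_lt_rowLen.mp h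
  have h2 : a < μ.colLen b := mem_iff_lt_colLen.mp h
  have h3 := colLen_le μ b
  simp only [hookLen, fB, beta]; omega

lemma hook_pos {μ : YoungDiagram} {a b : ℕ} (h : (a, b) ∈ μ) : 0 < hookLen μ a b := by
  have h1 : b < μ.rowLen a := mem_iff_lt_rowLen.mp h
  have h2 : a < μ.colLen b := mem_iff_lt_colLen.mp h
  simp only [hookLen]; omega

lemma fB_mono {μ : YoungDiagram} : Monotone (fB μ) := by
  intro b b' h
  have h1 : μ.colLen b' ≤ μ.colLen b := μ.colLen_anti b b' h
  have h2 := colLen_le μ b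
  simp only [fB]; omega

/-- Existence of a hook of given length in row `a`, when the candidate gap is not a beta value. -/
lemma exists_hook {μ : YoungDiagram} {a x : ℕ} (ha : a < μ.colLen 0) (hx1 : 1 ≤ x)
    (hx2 : x ≤ beta μ a) (hcl : ∀ i < μ.colLen 0, beta μ i ≠ beta μ a - x) :
    ∃ b, (a, b) ∈ μ ∧ hookLen μ a b = x := by
  classical
  obtain ⟨s, hs⟩ : ∃ s, s = beta μ a - x := ⟨_, rfl⟩
  have hex : ∃ b, s ≤ fB μ b := by
    refine ⟨s, ?_⟩
    have := colLen_le μ s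
    simp only [fB]; omega
  obtain ⟨b, hb, hbmin⟩ : ∃ b, s ≤ fB μ b ∧ ∀ b' < b, ¬ s ≤ fB μ b' :=
    ⟨Nat.find hex, Nat.find_spec hex, fun b' h => Nat.find_min hex h⟩
  have heq : fB μ b = s := by
    rcases Nat.eq_or_lt_of_le hb with h | hlt
    · exact h.symm
    · exfalso
      have hb0 : b ≠ 0 := by
        intro h0
        subst h0
        have hfb0 : fB μ 0 = 0 := by simp only [fB]; omega
        omega
      have h1 : ¬ s ≤ fB μ (b - 1) := hbmin (b - 1) (by omega)
      obtain ⟨i, hidef⟩ : ∃ i, i = b - 1 + μ.colLen 0 - s := ⟨_, rfl⟩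
      have hC1 := colLen_le μ (b - 1)
      have hCb := colLen_le μ b
      have hfb1 : fB μ (b - 1) = b - 1 + μ.colLen 0 - μ.colLen (b - 1) := rfl
      have hfb : fB μ b = b + μ.colLen 0 - μ.colLen b := rfl
      have hilt : i < μ.colLen (b - 1) := by omega
      have hRi : b - 1 < μ.rowLen i := (mem_char μ i (b - 1)).mpr hilt
      have hRi2 : μ.rowLen i ≤ b := by
        by_contra hh
        push_neg at hh
        have h2 : i < μ.colLen b := (mem_char μ i b).mp hh
        omega
      have hir : i < μ.colLen 0 := lt_of_lt_of_le hilt hC1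
      refine hcl i hir ?_
      have hbeta : beta μ i = μ.rowLen i + μ.colLen 0 - i - 1 := rfl
      omega
  have hba : b < μ.rowLen a := by
    have hRapos : 0 < μ.rowLen a := (mem_char μ a 0).mpr ha
    have h4 : ¬ a < μ.colLen (μ.rowLen a) := by
      rw [← mem_char]; omega
    have hCr := colLen_le μ (μ.rowLen a)
    have hfra : fB μ (μ.rowLen a) = μ.rowLen a + μ.colLen 0 - μ.colLen (μ.rowLen a) := rfl
    have hbeta : beta μ a = μ.rowLen a + μ.colLen 0 - a - 1 := rfl
    have h5 : s < fB μ (μ.rowLen a) := by omega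
    by_contra hge
    push_neg at hge
    have := fB_mono (μ := μ) hge
    omega
  have hmem : (a, b) ∈ μ := YoungDiagram.mem_iff_lt_rowLen.mpr hba
  refine ⟨b, hmem, ?_⟩
  have hsum := fB_add_hookLen hmem
  omega

/-- Beta-set characterisation of being an `ℓ`-core. -/
lemma isCore_iff {ℓ : ℕ} {μ : YoungDiagram} :
    IsCore ℓ μ ↔ ∀ i < μ.colLen 0, ℓ ≤ beta μ i →
      ∃ j < μ.colLen 0, beta μ j = beta μ i - ℓ := by
  constructor
  · intro hcore i hi hl
    by_contra hcon
    push_neg at hcon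
    rcases Nat.eq_zero_or_pos ℓ with rfl | hlpos
    · exact hcon i hi (by omega)
    obtain ⟨b, hmem, hhook⟩ := exists_hook hi hlpos hl hcon
    exact hcore i b hmem (hhook ▸ dvd_refl ℓ)
  · intro hcl a b hmem hdvd
    have ha : a < μ.colLen 0 := by
      have : (a, 0) ∈ μ := μ.up_left_mem le_rfl b.zero_le hmem
      exact mem_iff_lt_colLen.mp this
    have hpos := hook_pos hmem
    obtain ⟨m, hm⟩ := hdvd
    have hlpos : 0 < ℓ := by
      rcases Nat.eq_zero_or_pos ℓ with rfl | h
      · omega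
      · exact h
    have hmpos : 0 < m := by
      rcases Nat.eq_zero_or_pos m with rfl | h
      · omega
      · exact h
    have hsum := fB_add_hookLen hmem
    -- descent: for all m, if ℓ*m ≤ beta i then beta i - ℓ*m is a beta value
    have descend : ∀ (n : ℕ), ∀ i < μ.colLen 0, ℓ * n ≤ beta μ i →
        ∃ j < μ.colLen 0, beta μ j = beta μ i - ℓ * n := by
      intro n
      induction n with
      | zero => intro i hi _; exact ⟨i, hi, by simp⟩
      | succ n ih =>
        intro i hi hni
        have hfact : ℓ * (n + 1) = ℓ * n + ℓ := by ring
        have hl1 : ℓ ≤ beta μ i := by omega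
        obtain ⟨j, hj, hbj⟩ := hcl i hi hl1
        have hlj : ℓ * n ≤ beta μ j := by omega
        obtain ⟨j', hj', hbj'⟩ := ih j hj hlj
        refine ⟨j', hj', ?_⟩
        have hbjpos := beta_pos hj
        omega
    have hle : ℓ * m ≤ beta μ a := by omega
    obtain ⟨j, hj, hbj⟩ := descend m a ha hle
    have : beta μ j = fB μ b := by omega
    exact fB_ne_beta b hj this

/-! ### The beta set as a finset -/

/-- The beta set of a Young diagram. -/
def BSet (μ : YoungDiagram) : Finset ℕ := (Finset.range (μ.colLen 0)).image (beta μ)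

lemma mem_BSet {μ : YoungDiagram} {x : ℕ} :
    x ∈ BSet μ ↔ ∃ i < μ.colLen 0, beta μ i = x := by
  simp [BSet]

lemma card_BSet (μ : YoungDiagram) : (BSet μ).card = μ.colLen 0 := by
  rw [BSet, Finset.card_image_of_injOn, Finset.card_range]
  intro i hi j hj hij
  simp only [Finset.coe_range, Set.mem_Iio] at hi hj
  by_contra hne
  rcases Nat.lt_or_ge i j with h | h
  · exact absurd hij (Nat.ne_of_gt (beta_lt h hj))
  · have h' : j < i := by omega
    exact absurd hij.symm (Nat.ne_of_gt (beta_lt h' hi))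

lemma zero_not_mem_BSet (μ : YoungDiagram) : 0 ∉ BSet μ := by
  rw [mem_BSet]
  rintro ⟨i, hi, h⟩
  exact absurd h (Nat.ne_of_gt (beta_pos hi))

lemma isCore_iff_BSet {ℓ : ℕ} {μ : YoungDiagram} :
    IsCore ℓ μ ↔ ∀ x ∈ BSet μ, ℓ ≤ x → x - ℓ ∈ BSet μ := by
  rw [isCore_iff]
  constructor
  · intro h x hx hlx
    rw [mem_BSet] at hx ⊢
    obtain ⟨i, hi, rfl⟩ := hx
    obtain ⟨j, hj, hbj⟩ := h i hi hlx
    exact ⟨j, hj, hbj⟩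
  · intro h i hi hl
    have hx : beta μ i ∈ BSet μ := mem_BSet.mpr ⟨i, hi, rfl⟩
    have := h _ hx hl
    rw [mem_BSet] at this
    obtain ⟨j, hj, hbj⟩ := this
    exact ⟨j, hj, hbj⟩

/-! ### Reconstructing a diagram from a beta set -/

/-- The increasing enumeration of a finset of naturals. -/
def gB (B : Finset ℕ) : Fin B.card → ℕ := fun i => B.orderEmbOfFin rfl i

lemma gB_strictMono (B : Finset ℕ) : StrictMono (gB B) :=
  (B.orderEmbOfFin rfl).strictMono

lemma gB_mem (B : Finset ℕ) (i : Fin B.card) : gB B i ∈ B :=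
  Finset.orderEmbOfFin_mem B rfl i

lemma gB_add_le (B : Finset ℕ) :
    ∀ (d j1 j2 : ℕ) (h1 : j1 < B.card) (h2 : j2 < B.card), j1 + d = j2 →
      gB B ⟨j1, h1⟩ + d ≤ gB B ⟨j2, h2⟩ := by
  intro d
  induction d with
  | zero =>
    intro j1 j2 h1 h2 h
    have hj : j1 = j2 := by omega
    subst hj
    simp
  | succ d ih =>
    intro j1 j2 h1 h2 h
    have hmid : j1 + d < B.card := by omega
    have ha := ih j1 (j1 + d) h1 hmid rfl
    have hb : gB B ⟨j1 + d, hmid⟩ < gB B ⟨j2, h2⟩ :=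
      gB_strictMono B (by rw [Fin.mk_lt_mk]; omega)
    omega

lemma gB_ge (B : Finset ℕ) (h0 : 0 ∉ B) {j : ℕ} (hj : j < B.card) :
    j + 1 ≤ gB B ⟨j, hj⟩ := by
  have hpos : 0 < B.card := by omega
  have h1 := gB_add_le B j 0 j hpos hj (by omega)
  have h2 : gB B ⟨0, hpos⟩ ≠ 0 := fun h => h0 (h ▸ gB_mem B ⟨0, hpos⟩)
  omega

/-- The row-length function built from a beta set. -/
def wf (B : Finset ℕ) (i : Fin B.card) : ℕ :=
  gB B ⟨B.card - 1 - i.1, by have := i.isLt; omega⟩ - (B.card - 1 - i.1)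

lemma wf_sorted (B : Finset ℕ) : (List.ofFn (wf B)).SortedGE := by
  rw [List.sortedGE_ofFn_iff, antitone_iff_forall_lt]
  intro i j hij
  simp only [wf]
  have hi := i.isLt
  have hj := j.isLt
  have hlt : i.1 < j.1 := hij
  have := gB_add_le B (j.1 - i.1) (B.card - 1 - j.1) (B.card - 1 - i.1)
    (by omega) (by omega) (by omega)
  simp only [ge_iff_le]
  omega

/-- The Young diagram with beta set `B`. -/
def diagOfB (B : Finset ℕ) : YoungDiagram :=
  YoungDiagram.ofRowLens (List.ofFn (wf B)) (wf_sorted B)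

lemma rowLen_diagOfB {B : Finset ℕ} {i : ℕ} (hi : i < B.card) :
    (diagOfB B).rowLen i = wf B ⟨i, hi⟩ := by
  have hlen : i < (List.ofFn (wf B)).length := by simpa using hi
  have h := YoungDiagram.rowLen_ofRowLens (w := List.ofFn (wf B)) (hw := wf_sorted B) ⟨i, hlen⟩
  simpa [diagOfB] using h

lemma rowLen_diagOfB_zero {B : Finset ℕ} {i : ℕ} (hi : B.card ≤ i) :
    (diagOfB B).rowLen i = 0 := by
  by_contra h
  have hmem : (i, 0) ∈ diagOfB B := YoungDiagram.mem_iff_lt_rowLen.mpr (by omega)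
  rw [diagOfB, YoungDiagram.mem_ofRowLens] at hmem
  obtain ⟨hlt, -⟩ := hmem
  simp only [List.length_ofFn] at hlt
  omega

lemma wf_pos {B : Finset ℕ} (h0 : 0 ∉ B) (i : Fin B.card) : 0 < wf B i := by
  simp only [wf]
  have hi := i.isLt
  have := gB_ge B h0 (j := B.card - 1 - i.1) (by omega)
  omega

lemma colLen_diagOfB {B : Finset ℕ} (h0 : 0 ∉ B) : (diagOfB B).colLen 0 = B.card := by
  rcases Nat.eq_zero_or_pos B.card with hc | hc
  · rw [hc]
    by_contra h
    have hpos : 0 < (diagOfB B).colLen 0 := by omega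
    have hmem : (0, 0) ∈ diagOfB B := YoungDiagram.mem_iff_lt_colLen.mpr hpos
    have := YoungDiagram.mem_iff_lt_rowLen.mp hmem
    rw [rowLen_diagOfB_zero (by omega)] at this
    omega
  · apply Nat.le_antisymm
    · by_contra h
      push_neg at h
      have hmem : (B.card, 0) ∈ diagOfB B := YoungDiagram.mem_iff_lt_colLen.mpr h
      have := YoungDiagram.mem_iff_lt_rowLen.mp hmem
      rw [rowLen_diagOfB_zero le_rfl] at this
      omega
    · have hmem : (B.card - 1, 0) ∈ diagOfB B := by
        rw [YoungDiagram.mem_iff_lt_rowLen, rowLen_diagOfB (by omega)]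
        exact wf_pos h0 _
      have := YoungDiagram.mem_iff_lt_colLen.mp hmem
      omega

lemma beta_diagOfB {B : Finset ℕ} (h0 : 0 ∉ B) {i : ℕ} (hi : i < B.card) :
    beta (diagOfB B) i = gB B ⟨B.card - 1 - i, by omega⟩ := by
  rw [beta, colLen_diagOfB h0, rowLen_diagOfB hi]
  simp only [wf]
  have := gB_ge B h0 (j := B.card - 1 - i) (by omega)
  omega

lemma BSet_diagOfB {B : Finset ℕ} (h0 : 0 ∉ B) : BSet (diagOfB B) = B := by
  ext x
  rw [mem_BSet, colLen_diagOfB h0]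
  constructor
  · rintro ⟨i, hi, rfl⟩
    rw [beta_diagOfB h0 hi]
    exact gB_mem B _
  · intro hx
    have : x ∈ Set.range (B.orderEmbOfFin rfl) := by
      rw [Finset.range_orderEmbOfFin]
      exact hx
    obtain ⟨j, hj⟩ := this
    have hjlt := j.isLt
    refine ⟨B.card - 1 - j.1, by omega, ?_⟩
    rw [beta_diagOfB h0 (by omega)]
    have : (⟨B.card - 1 - (B.card - 1 - j.1), by omega⟩ : Fin B.card) = j := by
      apply Fin.ext; simp; omega
    rw [gB, this]
    exact hj

lemma diagOfB_BSet (μ : YoungDiagram) : diagOfB (BSet μ) = μ := by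
  have hcard := card_BSet μ
  have hrow : ∀ i, (diagOfB (BSet μ)).rowLen i = μ.rowLen i := by
    intro i
    rcases Nat.lt_or_ge i (BSet μ).card with hi | hi
    · -- identify gB (BSet μ) with the decreasing enumeration of beta
      have hgB : ∀ j : Fin (BSet μ).card, gB (BSet μ) j = beta μ (μ.colLen 0 - 1 - j.1) := by
        have hf : (fun j : Fin (BSet μ).card => beta μ (μ.colLen 0 - 1 - j.1)) =
            (BSet μ).orderEmbOfFin rfl := by
          apply Finset.orderEmbOfFin_unique
          · intro j
            have hj := j.isLt
            exact mem_BSet.mpr ⟨μ.colLen 0 - 1 - j.1, by omega, rfl⟩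
          · intro j j' hjj'
            have hj := j.isLt
            have hj' := j'.isLt
            have h1 : μ.colLen 0 - 1 - j'.1 < μ.colLen 0 - 1 - j.1 := by
              have : j.1 < j'.1 := hjj'
              omega
            exact beta_lt h1 (by omega)
        intro j
        rw [gB, ← hf]
      rw [rowLen_diagOfB hi, wf, hgB]
      simp only
      have hpos : 0 < μ.rowLen i := (mem_char μ i 0).mpr (by omega)
      have hbeq : μ.colLen 0 - 1 - ((BSet μ).card - 1 - i) = i := by omega
      rw [hbeq]
      simp only [beta]
      omega
    · rw [rowLen_diagOfB_zero hi]
      have : ¬ (i, 0) ∈ μ := by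
        rw [YoungDiagram.mem_iff_lt_colLen]
        omega
      rw [YoungDiagram.mem_iff_lt_rowLen] at this
      omega
  ext ⟨i, j⟩
  rw [YoungDiagram.mem_cells, YoungDiagram.mem_cells, YoungDiagram.mem_iff_lt_rowLen,
    YoungDiagram.mem_iff_lt_rowLen, hrow]

/-! ### Transpose -/

lemma hookLen_transpose (μ : YoungDiagram) (a b : ℕ) :
    hookLen μ.transpose a b = hookLen μ b a := by
  simp only [hookLen, YoungDiagram.rowLen_transpose, YoungDiagram.colLen_transpose]
  omega

lemma isCore_transpose {ℓ : ℕ} {μ : YoungDiagram} (h : IsCore ℓ μ) :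
    IsCore ℓ μ.transpose := by
  intro a b hmem
  rw [hookLen_transpose]
  exact h b a (YoungDiagram.mem_transpose.mp hmem)

lemma isCore_transpose_iff {ℓ : ℕ} {μ : YoungDiagram} :
    IsCore ℓ μ ↔ IsCore ℓ μ.transpose := by
  constructor
  · exact isCore_transpose
  · intro h
    have := isCore_transpose h
    rwa [YoungDiagram.transpose_transpose] at this

/-! ### From closed beta sets to residue counts -/

variable {ℓ : ℕ}

/-- A set `B` is `ℓ`-closed if subtracting `ℓ` stays in `B`. -/
def Closed (ℓ : ℕ) (B : Finset ℕ) : Prop := ∀ x ∈ B, ℓ ≤ x → x - ℓ ∈ B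

lemma mod_ne_zero (hℓ : 2 ≤ ℓ) {B : Finset ℕ} (h0 : 0 ∉ B) (hcl : Closed ℓ B) :
    ∀ x ∈ B, x % ℓ ≠ 0 := by
  intro x
  induction x using Nat.strong_induction_on with
  | _ x ih =>
    intro hx hmod
    have hxne : x ≠ 0 := fun h => h0 (h ▸ hx)
    have hxl : ℓ ≤ x := by
      rcases Nat.lt_or_ge x ℓ with h | h
      · have := Nat.mod_eq_of_lt h
        omega
      · exact h
    have hmem := hcl x hx hxl
    have hmod' : (x - ℓ) % ℓ = 0 := by
      have : x % ℓ = (x - ℓ) % ℓ := by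
        conv_lhs => rw [← Nat.sub_add_cancel hxl]
        rw [Nat.add_mod_right]
      omega
    exact ih (x - ℓ) (by omega) hmem hmod'

/-- downward-closed finsets of naturals are ranges -/
lemma dc_eq_range (s : Finset ℕ) (h : ∀ j, j + 1 ∈ s → j ∈ s) : s = Finset.range s.card := by
  have hdc : ∀ j ∈ s, ∀ i ≤ j, i ∈ s := by
    intro j
    induction j with
    | zero =>
      intro hj i hi
      have hi0 : i = 0 := Nat.le_zero.mp hi
      rwa [hi0]
    | succ n ih =>
      intro hj i hi
      rcases Nat.eq_or_lt_of_le hi with rfl | hlt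
      · exact hj
      · exact ih (h n hj) i (by omega)
  rcases s.eq_empty_or_nonempty with rfl | hne
  · simp
  · have hsub : s ⊆ Finset.range (s.max' hne + 1) := fun x hx =>
      Finset.mem_range.mpr (Nat.lt_succ_of_le (s.le_max' x hx))
    have hcard : s.card ≤ s.max' hne + 1 := by
      simpa using Finset.card_le_card hsub
    have hsub2 : Finset.range s.card ⊆ s := by
      intro i hi
      rw [Finset.mem_range] at hi
      exact hdc _ (s.max'_mem hne) i (by omega)
    exact (Finset.eq_of_subset_of_card_le hsub2 (by rw [Finset.card_range])).symm

/-- The residue count function of a set. -/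
def cnt (ℓ : ℕ) (B : Finset ℕ) (t : Fin (ℓ - 1)) : ℕ :=
  (B.filter (fun x => x % ℓ = t.1 + 1)).card

lemma filter_class_eq (hℓ : 2 ≤ ℓ) {B : Finset ℕ} (h0 : 0 ∉ B) (hcl : Closed ℓ B)
    (t : Fin (ℓ - 1)) :
    B.filter (fun x => x % ℓ = t.1 + 1) =
      (Finset.range (cnt ℓ B t)).image (fun j => (t.1 + 1) + ℓ * j) := by
  classical
  set F := B.filter (fun x => x % ℓ = t.1 + 1) with hF
  have hlpos : 0 < ℓ := by omega
  have hdiv : ∀ x ∈ F, x = (t.1 + 1) + ℓ * (x / ℓ) := by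
    intro x hx
    rw [hF, Finset.mem_filter] at hx
    have := Nat.div_add_mod x ℓ
    omega
  set S := F.image (fun x => x / ℓ) with hS
  have hcardS : S.card = F.card := by
    rw [hS]
    apply Finset.card_image_of_injOn
    intro x hx y hy hxy
    simp only [Finset.mem_coe] at hx hy
    have hxy' : x / ℓ = y / ℓ := hxy
    have h1 := hdiv x hx
    have h2 := hdiv y hy
    rw [hxy'] at h1
    omega
  have hdcS : ∀ j, j + 1 ∈ S → j ∈ S := by
    intro j hj
    rw [hS, Finset.mem_image] at hj
    obtain ⟨x, hx, hxj⟩ := hj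
    have hxj' : x / ℓ = j + 1 := hxj
    have hxeq : x = (t.1 + 1) + ℓ * (j + 1) := by
      have := hdiv x hx
      rw [hxj'] at this
      exact this
    have hmul : ℓ * (j + 1) = ℓ * j + ℓ := by ring
    have hxB : x ∈ B := (Finset.mem_filter.mp hx).1
    have hxl : ℓ ≤ x := by omega
    have hmem := hcl x hxB hxl
    have hsub : x - ℓ = (t.1 + 1) + ℓ * j := by omega
    rw [hS, Finset.mem_image]
    refine ⟨x - ℓ, ?_, ?_⟩
    · rw [Finset.mem_filter]
      refine ⟨hmem, ?_⟩
      rw [hsub, Nat.add_mul_mod_self_left]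
      exact Nat.mod_eq_of_lt (by have := t.isLt; omega)
    · show (x - ℓ) / ℓ = j
      rw [hsub, Nat.add_mul_div_left _ _ hlpos]
      have : (t.1 + 1) / ℓ = 0 := Nat.div_eq_of_lt (by have := t.isLt; omega)
      omega
  have hSrange : S = Finset.range (cnt ℓ B t) := by
    have := dc_eq_range S hdcS
    rwa [hcardS] at this
  apply Finset.Subset.antisymm
  · intro x hx
    rw [Finset.mem_image]
    refine ⟨x / ℓ, ?_, (hdiv x hx).symm⟩
    rw [← hSrange, hS, Finset.mem_image]
    exact ⟨x, hx, rfl⟩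
  · intro y hy
    rw [Finset.mem_image] at hy
    obtain ⟨j, hj, rfl⟩ := hy
    rw [← hSrange, hS, Finset.mem_image] at hj
    obtain ⟨x, hx, hxj⟩ := hj
    have hxj' : x / ℓ = j := hxj
    have := hdiv x hx
    rw [hxj'] at this
    rw [← this]
    exact hx

lemma sum_cnt (hℓ : 2 ≤ ℓ) {B : Finset ℕ} (h0 : 0 ∉ B) (hcl : Closed ℓ B) :
    ∑ t : Fin (ℓ - 1), cnt ℓ B t = B.card := by
  classical
  have hlpos : 0 < ℓ := by omega
  have hmain := Finset.card_eq_sum_card_fiberwise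
    (f := fun x : ℕ => (⟨x % ℓ - 1, by have := Nat.mod_lt x hlpos; omega⟩ : Fin (ℓ - 1)))
    (s := B) (t := Finset.univ) (fun x _ => Finset.mem_univ _)
  rw [hmain]
  apply Finset.sum_congr rfl
  intro t _
  rw [cnt]
  congr 1
  apply Finset.filter_congr
  intro x hx
  have hmod := mod_ne_zero hℓ h0 hcl x hx
  have hlt : x % ℓ < ℓ := Nat.mod_lt x hlpos
  have ht := t.isLt
  constructor
  · intro h'
    apply Fin.ext
    show x % ℓ - 1 = t.1
    omega
  · intro h'
    have h'' : x % ℓ - 1 = t.1 := congrArg Fin.val h'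
    omega

/-- The set built from a residue count function. -/
def BofC (ℓ : ℕ) (c : Fin (ℓ - 1) → ℕ) : Finset ℕ :=
  Finset.univ.biUnion (fun t => (Finset.range (c t)).image (fun j => (t.1 + 1) + ℓ * j))

lemma mem_BofC {c : Fin (ℓ - 1) → ℕ} {x : ℕ} :
    x ∈ BofC ℓ c ↔ ∃ t : Fin (ℓ - 1), ∃ j < c t, x = (t.1 + 1) + ℓ * j := by
  simp only [BofC, Finset.mem_biUnion, Finset.mem_univ, true_and, Finset.mem_image,
    Finset.mem_range]
  constructor
  · rintro ⟨t, j, hj, rfl⟩; exact ⟨t, j, hj, rfl⟩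
  · rintro ⟨t, j, hj, rfl⟩; exact ⟨t, j, hj, rfl⟩

lemma zero_not_mem_BofC (c : Fin (ℓ - 1) → ℕ) : 0 ∉ BofC ℓ c := by
  rw [mem_BofC]
  rintro ⟨t, j, hj, h⟩
  omega

lemma closed_BofC (hℓ : 2 ≤ ℓ) (c : Fin (ℓ - 1) → ℕ) : Closed ℓ (BofC ℓ c) := by
  intro x hx hxl
  rw [mem_BofC] at hx ⊢
  obtain ⟨t, j, hj, rfl⟩ := hx
  have ht := t.isLt
  obtain ⟨j', rfl⟩ : ∃ j', j = j' + 1 := by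
    rcases Nat.eq_zero_or_pos j with rfl | h
    · simp only [Nat.mul_zero, Nat.add_zero] at hxl; omega
    · exact ⟨j - 1, by omega⟩
  have hmul : ℓ * (j' + 1) = ℓ * j' + ℓ := by ring
  exact ⟨t, j', by omega, by omega⟩

lemma mod_BofC (hℓ : 2 ≤ ℓ) (t : Fin (ℓ - 1)) (j : ℕ) :
    ((t.1 + 1) + ℓ * j) % ℓ = t.1 + 1 := by
  rw [Nat.add_mul_mod_self_left]
  exact Nat.mod_eq_of_lt (by have := t.isLt; omega)

lemma card_BofC (hℓ : 2 ≤ ℓ) (c : Fin (ℓ - 1) → ℕ) :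
    (BofC ℓ c).card = ∑ t : Fin (ℓ - 1), c t := by
  classical
  rw [BofC, Finset.card_biUnion]
  · apply Finset.sum_congr rfl
    intro t _
    rw [Finset.card_image_of_injOn, Finset.card_range]
    intro j1 _ j2 _ h
    have h' : (t.1 + 1) + ℓ * j1 = (t.1 + 1) + ℓ * j2 := h
    have hlpos : 0 < ℓ := by omega
    have hm : ℓ * j1 = ℓ * j2 := by omega
    exact Nat.eq_of_mul_eq_mul_left hlpos hm
  · intro t _ t' _ hne
    rw [Function.onFun, Finset.disjoint_left]
    intro x hx hx'
    rw [Finset.mem_image] at hx hx'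
    obtain ⟨j, _, rfl⟩ := hx
    obtain ⟨j', _, heq⟩ := hx'
    have h1 := mod_BofC hℓ t j
    have h2 := mod_BofC hℓ t' j'
    rw [heq] at h2
    exact hne (Fin.ext (by omega)).symm

lemma cnt_BofC (hℓ : 2 ≤ ℓ) (c : Fin (ℓ - 1) → ℕ) (t : Fin (ℓ - 1)) :
    cnt ℓ (BofC ℓ c) t = c t := by
  classical
  rw [cnt]
  have : (BofC ℓ c).filter (fun x => x % ℓ = t.1 + 1) =
      (Finset.range (c t)).image (fun j => (t.1 + 1) + ℓ * j) := by
    ext x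
    rw [Finset.mem_filter, mem_BofC, Finset.mem_image]
    constructor
    · rintro ⟨⟨t', j, hj, rfl⟩, hmod⟩
      have h1 := mod_BofC hℓ t' j
      have ht'eq : t' = t := Fin.ext (by omega)
      subst ht'eq
      exact ⟨j, Finset.mem_range.mpr hj, rfl⟩
    · rintro ⟨j, hj, rfl⟩
      rw [Finset.mem_range] at hj
      exact ⟨⟨t, j, hj, rfl⟩, mod_BofC hℓ t j⟩
  rw [this, Finset.card_image_of_injOn, Finset.card_range]
  intro j1 _ j2 _ h
  have h' : (t.1 + 1) + ℓ * j1 = (t.1 + 1) + ℓ * j2 := h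
  have hlpos : 0 < ℓ := by omega
  have hm : ℓ * j1 = ℓ * j2 := by omega
  exact Nat.eq_of_mul_eq_mul_left hlpos hm

lemma BofC_cnt (hℓ : 2 ≤ ℓ) {B : Finset ℕ} (h0 : 0 ∉ B) (hcl : Closed ℓ B) :
    BofC ℓ (cnt ℓ B) = B := by
  classical
  ext x
  rw [mem_BofC]
  constructor
  · rintro ⟨t, j, hj, rfl⟩
    have := filter_class_eq hℓ h0 hcl t
    have hx : (t.1 + 1) + ℓ * j ∈ (Finset.range (cnt ℓ B t)).image
        (fun j => (t.1 + 1) + ℓ * j) :=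
      Finset.mem_image.mpr ⟨j, Finset.mem_range.mpr hj, rfl⟩
    rw [← this, Finset.mem_filter] at hx
    exact hx.1
  · intro hx
    have hmod := mod_ne_zero hℓ h0 hcl x hx
    have hlpos : 0 < ℓ := by omega
    have hmodlt := Nat.mod_lt x hlpos
    set t : Fin (ℓ - 1) := ⟨x % ℓ - 1, by omega⟩ with ht
    have hxf : x ∈ B.filter (fun y => y % ℓ = t.1 + 1) := by
      rw [Finset.mem_filter]
      refine ⟨hx, ?_⟩
      show x % ℓ = (x % ℓ - 1) + 1
      omega
    rw [filter_class_eq hℓ h0 hcl t, Finset.mem_image] at hxf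
    obtain ⟨j, hj, hxe⟩ := hxf
    exact ⟨t, j, Finset.mem_range.mp hj, hxe.symm⟩

end CoreAux

open CoreAux

/-- The number of `ℓ`-core partitions whose largest part equals `k`
is the binomial coefficient `C(k + ℓ - 2, k)`. -/
theorem stmt_0 (ℓ k : ℕ) (hℓ : 2 ≤ ℓ) :
    Nat.card {μ : YoungDiagram // IsCore ℓ μ ∧ μ.rowLen 0 = k} =
      (k + ℓ - 2).choose k := by
  classical
  -- step 1: transpose
  have e12 : {μ : YoungDiagram // IsCore ℓ μ ∧ μ.rowLen 0 = k} ≃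
      {μ : YoungDiagram // IsCore ℓ μ ∧ μ.colLen 0 = k} := by
    refine Equiv.subtypeEquiv YoungDiagram.transposeOrderIso.toEquiv ?_
    intro μ
    have : (YoungDiagram.transposeOrderIso.toEquiv μ) = μ.transpose := rfl
    rw [this]
    exact and_congr isCore_transpose_iff (by rw [YoungDiagram.colLen_transpose])
  -- step 2: beta sets
  have e23 : {μ : YoungDiagram // IsCore ℓ μ ∧ μ.colLen 0 = k} ≃
      {B : Finset ℕ // 0 ∉ B ∧ Closed ℓ B ∧ B.card = k} := by
    refine ⟨fun μ => ⟨BSet μ.1, zero_not_mem_BSet _, ?_, ?_⟩,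
      fun B => ⟨diagOfB B.1, ?_, ?_⟩, ?_, ?_⟩
    · exact fun x hx hlx => isCore_iff_BSet.mp μ.2.1 x hx hlx
    · rw [card_BSet]; exact μ.2.2
    · rw [isCore_iff_BSet, BSet_diagOfB B.2.1]
      exact B.2.2.1
    · rw [colLen_diagOfB B.2.1]; exact B.2.2.2
    · intro μ
      exact Subtype.ext (diagOfB_BSet μ.1)
    · intro B
      exact Subtype.ext (BSet_diagOfB B.2.1)
  -- step 3: residue counts
  have e34 : {B : Finset ℕ // 0 ∉ B ∧ Closed ℓ B ∧ B.card = k} ≃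
      {c : Fin (ℓ - 1) → ℕ // ∑ t, c t = k} := by
    refine ⟨fun B => ⟨cnt ℓ B.1, ?_⟩, fun c => ⟨BofC ℓ c.1, zero_not_mem_BofC _,
      closed_BofC hℓ _, ?_⟩, ?_, ?_⟩
    · rw [sum_cnt hℓ B.2.1 B.2.2.1]; exact B.2.2.2
    · rw [card_BofC hℓ]; exact c.2
    · intro B
      exact Subtype.ext (BofC_cnt hℓ B.2.1 B.2.2.1)
    · intro c
      apply Subtype.ext
      funext t
      exact cnt_BofC hℓ c.1 t
  -- step 4: multisets
  have e45 : {c : Fin (ℓ - 1) → ℕ // ∑ t, c t = k} ≃ Sym (Fin (ℓ - 1)) k := by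
    refine Equiv.subtypeEquiv
      (Finsupp.equivFunOnFinite.symm.trans Multiset.toFinsupp.toEquiv.symm) ?_
    intro c
    have h1 : Multiset.toFinsupp.toEquiv.symm (Finsupp.equivFunOnFinite.symm c) =
        Finsupp.toMultiset (Finsupp.equivFunOnFinite.symm c) := rfl
    rw [Equiv.trans_apply, h1, Finsupp.card_toMultiset,
      Finsupp.sum_fintype _ _ (fun _ => rfl)]
    simp [Finsupp.equivFunOnFinite]
  rw [Nat.card_congr (((e12.trans e23).trans e34).trans e45), Nat.card_eq_fintype_card,
    Sym.card_sym_eq_choose]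
  congr 1
  simp [Fintype.card_fin]
  omega
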